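/- Let g be odd, sign-preserving, and monotonically nondecreasing, W symmetric nonnegative, and f_i(x) = γ_i x² + β_i x + α_i with γ_i > 0. Suppose x* satisfies f_i'(x_i*) = f_j'(x_j*) for all i,j and ∑_i x_i* = P. Then along the dynamics ẋ_i = −c ∑_j W_{ij} g(f_i'(x_i) − f_j'(x_j)) with c > 0 started from ∑_i x_i(0) = P, the residual cost F̄(x) = ∑_i f_i(x_i) − ∑_i f_i(x_i*) is nonnegative on the feasible hyperplane and nonincreasing in time. -/

import Mathlib

theorem stmt_15 (n : ℕ) (W : Matrix (Fin n) (Fin n) ℝ)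
    (hsym : ∀ i j, W i j = W j i) (hnonneg : ∀ i j, 0 ≤ W i j)
    (g : ℝ → ℝ) (hodd : ∀ u, g (-u) = -g u) (hgsign : ∀ u, 0 ≤ u * g u)
    (hmono : Monotone g)
    (γ β α : Fin n → ℝ) (hγ : ∀ i, 0 < γ i)
    (f : Fin n → ℝ → ℝ) (hfdef : ∀ i y, f i y = γ i * y ^ 2 + β i * y + α i)
    (f' : Fin n → ℝ → ℝ) (hf'def : ∀ i y, f' i y = 2 * γ i * y + β i)
    (P : ℝ) (xstar : Fin n → ℝ)
    (hstar1 : ∀ i j, f' i (xstar i) = f' j (xstar j))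
    (hstar2 : ∑ i, xstar i = P)
    (c : ℝ) (hc : 0 < c)
    (x : ℝ → Fin n → ℝ)
    (hflow : ∀ t i, HasDerivAt (fun s => x s i)
      (-c * ∑ j, W i j * g (f' i (x t i) - f' j (x t j))) t)
    (hinit : ∑ i, x 0 i = P) :
    (∀ y : Fin n → ℝ, ∑ i, y i = P →
      0 ≤ ∑ i, f i (y i) - ∑ i, f i (xstar i)) ∧
    (∀ t s : ℝ, t ≤ s →
      ∑ i, f i (x s i) - ∑ i, f i (xstar i)
        ≤ ∑ i, f i (x t i) - ∑ i, f i (xstar i)) := by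
  constructor
  · -- nonnegativity
    intro y hy
    have key : ∀ i : Fin n, f i (y i) - f i (xstar i)
        = f' i (xstar i) * (y i - xstar i) + γ i * (y i - xstar i) ^ 2 := by
      intro i; rw [hfdef, hfdef, hf'def]; ring
    have hsplit : ∑ i, f i (y i) - ∑ i, f i (xstar i)
        = (∑ i, f' i (xstar i) * (y i - xstar i))
          + ∑ i, γ i * (y i - xstar i) ^ 2 := by
      rw [← Finset.sum_sub_distrib, ← Finset.sum_add_distrib]
      exact Finset.sum_congr rfl fun i _ => key i
    have hlin : ∑ i, f' i (xstar i) * (y i - xstar i) = 0 := by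
      rcases Nat.eq_zero_or_pos n with h0 | hpos
      · subst h0; simp
      · have i0 : Fin n := ⟨0, hpos⟩
        have : ∀ i : Fin n, f' i (xstar i) * (y i - xstar i)
            = f' i0 (xstar i0) * (y i - xstar i) := fun i => by rw [hstar1 i i0]
        rw [Finset.sum_congr rfl fun i _ => this i, ← Finset.mul_sum,
          Finset.sum_sub_distrib, hy, hstar2, sub_self, mul_zero]
    have hq : 0 ≤ ∑ i, γ i * (y i - xstar i) ^ 2 :=
      Finset.sum_nonneg fun i _ => mul_nonneg (hγ i).le (sq_nonneg _)
    rw [hsplit, hlin, zero_add]; exact hq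
  · -- monotonicity
    set F : ℝ → ℝ := fun t => ∑ i, f i (x t i) with hF
    set D : ℝ → ℝ := fun t => ∑ i, f' i (x t i)
      * (-c * ∑ j, W i j * g (f' i (x t i) - f' j (x t j))) with hD
    have hFd : ∀ t, HasDerivAt F (D t) t := by
      intro t
      have hFe : F = fun s => ∑ i, (γ i * (x s i) ^ 2 + β i * x s i + α i) := by
        funext s; exact Finset.sum_congr rfl fun i _ => hfdef i _
      rw [hFe]
      apply HasDerivAt.fun_sum
      intro i _
      have hx := hflow t i
      have h1 := (((hx.fun_pow 2).const_mul (γ i)).fun_add (hx.const_mul (β i))).add_const (α i)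
      convert h1 using 1
      rw [hf'def]; ring
    have hDle : ∀ t, D t ≤ 0 := by
      intro t
      set a : Fin n → ℝ := fun i => f' i (x t i) with ha
      set S : ℝ := ∑ i, ∑ j, a i * (W i j * g (a i - a j)) with hS
      have hD2 : D t = -c * S := by
        simp only [hD, hS, Finset.mul_sum]
        refine Finset.sum_congr rfl fun i _ => Finset.sum_congr rfl fun j _ => by ring
      have hswap : S = ∑ i, ∑ j, -(a j * (W i j * g (a i - a j))) := by
        rw [hS, Finset.sum_comm]
        refine Finset.sum_congr rfl fun i _ => Finset.sum_congr rfl fun j _ => ?_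
        have : g (a j - a i) = -g (a i - a j) := by
          rw [← hodd]; ring_nf
        rw [hsym j i, this]; ring
      have h2S : S + S = ∑ i, ∑ j, W i j * ((a i - a j) * g (a i - a j)) := by
        nth_rewrite 2 [hswap]
        rw [hS, ← Finset.sum_add_distrib]
        refine Finset.sum_congr rfl fun i _ => ?_
        rw [← Finset.sum_add_distrib]
        exact Finset.sum_congr rfl fun j _ => by ring
      have hSnn : 0 ≤ S := by
        have : 0 ≤ S + S := by
          rw [h2S]
          exact Finset.sum_nonneg fun i _ => Finset.sum_nonneg fun j _ =>
            mul_nonneg (hnonneg i j) (hgsign _)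
        linarith
      have := mul_nonneg hc.le hSnn
      rw [hD2]; linarith
    have hAnti : Antitone F := by
      apply antitone_of_deriv_nonpos
      · exact fun t => (hFd t).differentiableAt
      · intro t; rw [(hFd t).deriv]; exact hDle t
    intro t s hts
    have := hAnti hts
    exact sub_le_sub_right this (∑ i, f i (xstar i))
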